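/- Let p_1, …, p_n be pairwise distinct primes with 2^(η-1) ≤ p_i for all i, let x_0 = ∏_{i=1}^n p_i and p̂_i = x_0/p_i, and let P̂ be an integer with P̂ ≡ p̂_k (mod p_k) for every k. Suppose a, b, c are integers with a ≡ a_k (mod p_k), b ≡ b_k (mod p_k), c ≡ c_k (mod p_k), where |a_k|, |b_k|, |c_k| < 2^ε for every k, and suppose n·2^(3ε+1) ≤ 2^(η-1). Then a·b·c·P̂ ≡ ∑_{k=1}^n a_k·b_k·c_k·p̂_k (mod x_0), and |∑_{k=1}^n a_k·b_k·c_k·p̂_k| < x_0/2, so this sum is the unique representative of a·b·c·P̂ mod x_0 in the interval (−x_0/2, x_0/2]. -/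

import Mathlib

/-- Triple-product form of the CRT-ACD lemma from the CHLRS15 zeroizing attack:
with pairwise distinct η-bit primes `p k`, product `x0`, `phat k = x0 / p k`,
auxiliary `P ≡ phat k (mod p k)`, and samples `a ≡ aa k`, `b ≡ bb k`,
`c ≡ cc k (mod p k)` all with residues `< 2^ε` in absolute value, if
`n * 2^(3ε+1) ≤ 2^(η-1)` then `a*b*c*P ≡ ∑ k, aa k * bb k * cc k * phat k (mod x0)`,
the sum lies in `(-x0/2, x0/2]`, and it is the unique such representative. -/
theorem clt_crt_acd_triple (n η ε : ℕ) (p : Fin n → ℤ)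
    (hp : ∀ k, Prime (p k))
    (hdist : ∀ k l : Fin n, k ≠ l → p k ≠ p l)
    (hsize : ∀ k, (2 : ℤ) ^ (η - 1) ≤ p k)
    (x0 : ℤ) (hx0 : x0 = ∏ k, p k)
    (phat : Fin n → ℤ) (hphat : ∀ k, phat k = x0 / p k)
    (P : ℤ) (hP : ∀ k, P ≡ phat k [ZMOD p k])
    (a b c : ℤ) (aa bb cc : Fin n → ℤ)
    (haa : ∀ k, a ≡ aa k [ZMOD p k])
    (hbb : ∀ k, b ≡ bb k [ZMOD p k])
    (hcc : ∀ k, c ≡ cc k [ZMOD p k])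
    (hsa : ∀ k, |aa k| < 2 ^ ε) (hsb : ∀ k, |bb k| < 2 ^ ε)
    (hsc : ∀ k, |cc k| < 2 ^ ε)
    (hparam : (n : ℤ) * 2 ^ (3 * ε + 1) ≤ 2 ^ (η - 1)) :
    (a * b * c * P ≡ ∑ k, aa k * bb k * cc k * phat k [ZMOD x0]) ∧
    2 * |∑ k, aa k * bb k * cc k * phat k| < x0 ∧
    ∀ m : ℤ, a * b * c * P ≡ m [ZMOD x0] → -x0 < 2 * m → 2 * m ≤ x0 →
      m = ∑ k, aa k * bb k * cc k * phat k := by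
  set S := ∑ k, aa k * bb k * cc k * phat k with hS
  have hppos : ∀ k, (0:ℤ) < p k := fun k => lt_of_lt_of_le (by positivity) (hsize k)
  have hx0pos : 0 < x0 := by
    rw [hx0]; exact Finset.prod_pos fun k _ => hppos k
  have hdvd : ∀ k, p k ∣ x0 := fun k => hx0 ▸ Finset.dvd_prod_of_mem p (Finset.mem_univ k)
  have hphatmul : ∀ k, phat k * p k = x0 := fun k => by
    rw [hphat k]; exact Int.ediv_mul_cancel (hdvd k)
  have hphatpos : ∀ k, 0 < phat k := fun k => by
    nlinarith [hphatmul k, hppos k, hx0pos]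
  have hcop : ∀ k l, k ≠ l → IsCoprime (p k) (p l) := by
    intro k l hkl
    rw [Int.isCoprime_iff_gcd_eq_one, Int.gcd]
    refine (Nat.coprime_primes (Int.prime_iff_natAbs_prime.mp (hp k))
      (Int.prime_iff_natAbs_prime.mp (hp l))).mpr ?_
    intro h
    exact hdist k l hkl (by
      have hk := Int.natAbs_of_nonneg (hppos k).le
      have hl := Int.natAbs_of_nonneg (hppos l).le
      rw [← hk, ← hl, h])
  have hpdvdphat : ∀ k l : Fin n, k ≠ l → p k ∣ phat l := fun k l hkl =>
    (hcop k l hkl).dvd_of_dvd_mul_right (by rw [hphatmul l]; exact hdvd k)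
  -- per-prime divisibility
  have hmodk : ∀ k, p k ∣ (a * b * c * P - S) := by
    intro k
    have h1 : a * b * c * P ≡ aa k * bb k * cc k * phat k [ZMOD p k] :=
      (((haa k).mul (hbb k)).mul (hcc k)).mul (hP k)
    have h2 : p k ∣ (S - aa k * bb k * cc k * phat k) := by
      rw [hS, ← Finset.sum_erase_eq_sub (Finset.mem_univ k)]
      refine Finset.dvd_sum fun l hl => ?_
      exact Dvd.dvd.mul_left (hpdvdphat k l (fun h => (Finset.mem_erase.mp hl).1 h.symm)) _
    have h3 := (Int.ModEq.dvd h1)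
    have : a * b * c * P - S = -((aa k * bb k * cc k * phat k - a * b * c * P)
        + (S - aa k * bb k * cc k * phat k)) := by ring
    rw [this]
    exact dvd_neg.mpr (dvd_add h3 h2)
  have hx0dvd : x0 ∣ (a * b * c * P - S) := by
    rw [hx0]
    refine Finset.prod_dvd_of_coprime ?_ (fun k _ => hmodk k)
    intro k hk l hl hkl
    exact hcop k l hkl
  have hcong : a * b * c * P ≡ S [ZMOD x0] :=
    (Int.modEq_iff_dvd.mpr hx0dvd).symm
  -- size bound
  have hbound : 2 * |S| < x0 := by
    rcases Nat.eq_zero_or_pos n with hn | hn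
    · subst hn
      have hSz : S = 0 := by rw [hS]; simp
      rw [hSz]
      simpa using hx0pos
    have h2e : (1:ℤ) ≤ 2 ^ ε := one_le_pow₀ (by norm_num)
    have hMnn : (0:ℤ) ≤ 2 ^ ε - 1 := by linarith
    have habs : ∀ k : Fin n, |aa k * bb k * cc k * phat k| ≤ (2 ^ ε - 1) ^ 3 * phat k := by
      intro k
      have ha : |aa k| ≤ 2 ^ ε - 1 := by linarith [hsa k]
      have hb : |bb k| ≤ 2 ^ ε - 1 := by linarith [hsb k]
      have hc : |cc k| ≤ 2 ^ ε - 1 := by linarith [hsc k]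
      rw [abs_mul, abs_mul, abs_mul, abs_of_pos (hphatpos k)]
      have := mul_le_mul (mul_le_mul ha hb (abs_nonneg _) hMnn) hc (abs_nonneg _)
        (by positivity)
      nlinarith [hphatpos k]
    have hterm : ∀ k : Fin n, |aa k * bb k * cc k * phat k| * 2 ^ (η - 1)
        ≤ (2 ^ ε - 1) ^ 3 * x0 := by
      intro k
      calc |aa k * bb k * cc k * phat k| * 2 ^ (η - 1)
          ≤ ((2 ^ ε - 1) ^ 3 * phat k) * 2 ^ (η - 1) := by
            have : (0:ℤ) < 2 ^ (η - 1) := by positivity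
            exact mul_le_mul_of_nonneg_right (habs k) this.le
        _ ≤ (2 ^ ε - 1) ^ 3 * (phat k * p k) := by
            have := mul_le_mul_of_nonneg_left (hsize k) (hphatpos k).le
            nlinarith [pow_nonneg hMnn 3]
        _ = (2 ^ ε - 1) ^ 3 * x0 := by rw [hphatmul k]
    have hSabs : |S| * 2 ^ (η - 1) ≤ (n : ℤ) * ((2 ^ ε - 1) ^ 3 * x0) := by
      calc |S| * 2 ^ (η - 1) ≤ (∑ k, |aa k * bb k * cc k * phat k|) * 2 ^ (η - 1) := by
            have := Finset.abs_sum_le_sum_abs (fun k => aa k * bb k * cc k * phat k)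
              Finset.univ
            exact mul_le_mul_of_nonneg_right this (by positivity)
        _ = ∑ k, |aa k * bb k * cc k * phat k| * 2 ^ (η - 1) := by
            rw [Finset.sum_mul]
        _ ≤ ∑ _k : Fin n, (2 ^ ε - 1) ^ 3 * x0 := Finset.sum_le_sum fun k _ => hterm k
        _ = (n : ℤ) * ((2 ^ ε - 1) ^ 3 * x0) := by
            rw [Finset.sum_const, Finset.card_univ, Fintype.card_fin]; ring
    have hstrict : 2 * ((2 ^ ε - 1) ^ 3 : ℤ) < 2 ^ (3 * ε + 1) := by
      have h1 : ((2:ℤ) ^ ε - 1) ^ 3 < (2 ^ ε) ^ 3 :=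
        pow_lt_pow_left₀ (by linarith) hMnn (by norm_num)
      have h2 : ((2:ℤ) ^ ε) ^ 3 = 2 ^ (3 * ε) := by
        rw [← pow_mul, mul_comm]
      have h3 : (2:ℤ) ^ (3 * ε + 1) = 2 * 2 ^ (3 * ε) := by ring
      linarith
    have hnpos : (0:ℤ) < n := by exact_mod_cast hn
    have key : 2 * |S| * 2 ^ (η - 1) < 2 ^ (η - 1) * x0 := by
      calc 2 * |S| * 2 ^ (η - 1) = 2 * (|S| * 2 ^ (η - 1)) := by ring
        _ ≤ 2 * ((n : ℤ) * ((2 ^ ε - 1) ^ 3 * x0)) := by linarith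
        _ = (n : ℤ) * x0 * (2 * (2 ^ ε - 1) ^ 3) := by ring
        _ < (n : ℤ) * x0 * 2 ^ (3 * ε + 1) := by
            exact mul_lt_mul_of_pos_left hstrict (by positivity)
        _ = (n : ℤ) * 2 ^ (3 * ε + 1) * x0 := by ring
        _ ≤ 2 ^ (η - 1) * x0 := mul_le_mul_of_nonneg_right hparam hx0pos.le
    have hpow : (0:ℤ) < 2 ^ (η - 1) := by positivity
    calc 2 * |S| = 2 * |S| * 2 ^ (η - 1) / 2 ^ (η - 1) := by
          rw [Int.mul_ediv_cancel _ hpow.ne']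
      _ < x0 := by
          rw [mul_comm ((2:ℤ) ^ (η - 1)) x0] at key
          exact lt_of_mul_lt_mul_right (by
            rwa [Int.mul_ediv_cancel _ hpow.ne']) hpow.le
  refine ⟨hcong, hbound, ?_⟩
  intro m hm hlo hhi
  have hd : x0 ∣ m - S := (hcong.symm.trans hm).dvd
  have habs2 : |m - S| < x0 := by
    have h1 : -x0 < 2 * S ∧ 2 * S < x0 := by
      constructor <;> [nlinarith [abs_nonneg S, neg_abs_le S]; nlinarith [le_abs_self S]]
    rw [abs_lt]
    omega
  have := Int.eq_zero_of_abs_lt_dvd hd habs2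
  omega
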